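/- Let m and s be vertices of Γ with m ≁ s (not ∼-equivalent) and with m and s non-adjacent and distinct. If ℛ is a ΓW-partition based at the vertex s that splits some vertex in [m], then lk(m) is strictly contained in lk(s). In particular, if m is principal, then no ΓW-partition based at s splits any vertex of [m], i.e. all of [m]^± lies in a single side of any such partition. -/

import Mathlib

namespace GW

variable {V : Type*}

/-- `V^±`: the set of generators and their inverses, identified with `V × Bool`;
`(v, true)` is the generator `v` and `(v, false)` is `v⁻¹`. -/
abbrev Vpm (V : Type*) := V × Bool

/-- The inverse of an element of `V^±`. -/
def pinv (x : Vpm V) : Vpm V := (x.1, !x.2)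

/-- The link of a vertex: the set of vertices adjacent to it. -/
def lk (Γ : SimpleGraph V) (v : V) : Set V := {w | Γ.Adj v w}

/-- The star of a vertex: its link together with the vertex itself. -/
def st (Γ : SimpleGraph V) (v : V) : Set V := lk Γ v ∪ {v}

/-- A vertex is principal if no vertex has strictly larger link. -/
def Principal (Γ : SimpleGraph V) (v : V) : Prop := ¬ ∃ w : V, lk Γ v ⊂ lk Γ w

/-- The relation `u ∼ w`: `lk(u) ⊆ st(w)` and `lk(w) ⊆ st(u)`. -/
def Eqv (Γ : SimpleGraph V) (u w : V) : Prop :=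
  lk Γ u ⊆ st Γ w ∧ lk Γ w ⊆ st Γ u

/-- For `S ⊆ V`, the set `S^± ⊆ V^±` of elements with underlying vertex in `S`. -/
def pm (S : Set V) : Set (Vpm V) := {x | x.1 ∈ S}

/-- `u` and `w` lie in the same connected component of `Γ − lk(m)`
(the induced subgraph on the complement of the link of `m`). -/
def SameComp (Γ : SimpleGraph V) (m u w : V) : Prop :=
  ∃ (hu : u ∈ (lk Γ m)ᶜ) (hw : w ∈ (lk Γ m)ᶜ),
    (Γ.induce ((lk Γ m)ᶜ : Set V)).Reachable ⟨u, hu⟩ ⟨w, hw⟩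

/-- The vertex set of the connected component of `u` in `Γ − lk(m)`. -/
def comp (Γ : SimpleGraph V) (m u : V) : Set V := {w | SameComp Γ m u w}

/-- `U ⊆ V^±` is `m`-inseparable if `U = {u}` or `U = {u⁻¹}` for a vertex `u` whose
component in `Γ − lk(m)` is the single vertex `u`, or `U = C^±` for a component `C`
of `Γ − lk(m)` with more than one vertex. -/
def Inseparable (Γ : SimpleGraph V) (m : Vpm V) (U : Set (Vpm V)) : Prop :=
  (∃ u : V, comp Γ m.1 u = {u} ∧ (U = {(u, true)} ∨ U = {(u, false)})) ∨
  (∃ u : V, u ∈ (lk Γ m.1)ᶜ ∧ comp Γ m.1 u ≠ {u} ∧ U = pm (comp Γ m.1 u))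

/-- A `ΓW`-subset based at `m`: a union of `m`-inseparable subsets containing `m`
but not `m⁻¹`. -/
def GWSubset (Γ : SimpleGraph V) (m : Vpm V) (P : Set (Vpm V)) : Prop :=
  m ∈ P ∧ pinv m ∉ P ∧ ∀ x ∈ P, ∃ U : Set (Vpm V), Inseparable Γ m U ∧ x ∈ U ∧ U ⊆ P

/-- `P* = V^± ∖ lk(m)^± ∖ P`. -/
def pstar (Γ : SimpleGraph V) (m : Vpm V) (P : Set (Vpm V)) : Set (Vpm V) :=
  (pm (lk Γ m.1))ᶜ \ P

/-- A `ΓW`-partition `{P | P* | lk(m)^±}` based at `m`, recorded together with its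
base `m` and the side `P` containing `m`; both sides are `ΓW`-subsets with at least
two elements. -/
structure GWPartition (Γ : SimpleGraph V) where
  base : Vpm V
  P : Set (Vpm V)
  hP : GWSubset Γ base P
  hPstar : GWSubset Γ (pinv base) (pstar Γ base P)
  thickP : 2 ≤ P.ncard
  thickPstar : 2 ≤ (pstar Γ base P).ncard

/-- The side `P*` of a `ΓW`-partition. -/
def GWPartition.Pstar {Γ : SimpleGraph V} (Pa : GWPartition Γ) : Set (Vpm V) :=
  pstar Γ Pa.base Pa.P

/-- The (unordered) pair of sides of a `ΓW`-partition; two `ΓW`-partitions are equal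
as partitions exactly when they have the same sides. -/
def sidesOf {Γ : SimpleGraph V} (Pa : GWPartition Γ) : Set (Set (Vpm V)) :=
  {Pa.P, Pa.Pstar}

/-- A `ΓW`-partition splits a vertex `v` if `v` and `v⁻¹` lie in different sides. -/
def Splits {Γ : SimpleGraph V} (Pa : GWPartition Γ) (v : V) : Prop :=
  ((v, true) ∈ Pa.P ∧ (v, false) ∈ Pa.Pstar) ∨
  ((v, false) ∈ Pa.P ∧ (v, true) ∈ Pa.Pstar)

/-- Compatibility of `ΓW`-partitions: some pair of sides is disjoint, or the
underlying vertices of the bases are adjacent with different stars. -/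
def Compatible {Γ : SimpleGraph V} (Pa Qa : GWPartition Γ) : Prop :=
  (Pa.P ∩ Qa.P = ∅ ∨ Pa.P ∩ Qa.Pstar = ∅ ∨ Pa.Pstar ∩ Qa.P = ∅ ∨ Pa.Pstar ∩ Qa.Pstar = ∅) ∨
  (Γ.Adj Pa.base.1 Qa.base.1 ∧ st Γ Pa.base.1 ≠ st Γ Qa.base.1)

/-- Weak compatibility: some pair of sides is disjoint, or the underlying vertices of
the bases are adjacent (hence distinct). -/
def WeakCompatible {Γ : SimpleGraph V} (Pa Qa : GWPartition Γ) : Prop :=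
  (Pa.P ∩ Qa.P = ∅ ∨ Pa.P ∩ Qa.Pstar = ∅ ∨ Pa.Pstar ∩ Qa.P = ∅ ∨ Pa.Pstar ∩ Qa.Pstar = ∅) ∨
  Γ.Adj Pa.base.1 Qa.base.1

/-- A `ΓW`-partition is based at the vertex `u` if it is based at `u` or `u⁻¹`, i.e.
`lk(u)` equals the link of the recorded base and the partition separates `u` from
`u⁻¹`. -/
def BasedAtVtx {Γ : SimpleGraph V} (Pa : GWPartition Γ) (u : V) : Prop :=
  lk Γ u = lk Γ Pa.base.1 ∧ Splits Pa u

/-- `M(U)`: the largest size of a collection of pairwise distinct, pairwise compatible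
`ΓW`-partitions, each based at some element of `U`. -/
noncomputable def M (Γ : SimpleGraph V) (U : Set V) : ℕ :=
  sSup {k : ℕ | ∃ C : Finset (GWPartition Γ), C.card = k ∧
    (∀ Pa ∈ C, Pa.base.1 ∈ U) ∧
    (∀ Pa ∈ C, ∀ Qa ∈ C, Pa ≠ Qa → sidesOf Pa ≠ sidesOf Qa ∧ Compatible Pa Qa)}

/-- `μ(U)`: the largest size of a collection of pairwise distinct, pairwise weakly
compatible `ΓW`-partitions, each based at some element of `U`. -/
noncomputable def Mweak (Γ : SimpleGraph V) (U : Set V) : ℕ :=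
  sSup {k : ℕ | ∃ C : Finset (GWPartition Γ), C.card = k ∧
    (∀ Pa ∈ C, Pa.base.1 ∈ U) ∧
    (∀ Pa ∈ C, ∀ Qa ∈ C, Pa ≠ Qa → sidesOf Pa ≠ sidesOf Qa ∧ WeakCompatible Pa Qa)}

/-- The commutation relations defining the right-angled Artin group `A_Γ`. -/
def Rels (Γ : SimpleGraph V) : Set (FreeGroup V) :=
  {r | ∃ u w : V, Γ.Adj u w ∧
    r = FreeGroup.of u * FreeGroup.of w * (FreeGroup.of u)⁻¹ * (FreeGroup.of w)⁻¹}

/-- The right-angled Artin group `A_Γ`. -/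
abbrev RAAG (Γ : SimpleGraph V) := PresentedGroup (Rels Γ)

/-- The generator of `A_Γ` corresponding to a vertex. -/
def ofv (Γ : SimpleGraph V) (v : V) : RAAG Γ := PresentedGroup.of v

/-- The element of `A_Γ` corresponding to an element of `V^±`. -/
def gen (Γ : SimpleGraph V) (x : Vpm V) : RAAG Γ :=
  if x.2 then ofv Γ x.1 else (ofv Γ x.1)⁻¹

open scoped Classical in
/-- The image of the generator `v` under the Whitehead automorphism `φ(P, m)`. -/
noncomputable def whImage (Γ : SimpleGraph V) (P : Set (Vpm V)) (m : Vpm V) (v : V) :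
    RAAG Γ :=
  if (v, true) ∈ P ∧ (v, false) ∈ P then gen Γ m * ofv Γ v * (gen Γ m)⁻¹
  else if v ≠ m.1 ∧ (v, true) ∈ P ∧ (v, false) ∈ pstar Γ m P then ofv Γ v * (gen Γ m)⁻¹
  else if v ≠ m.1 ∧ (v, false) ∈ P ∧ (v, true) ∈ pstar Γ m P then gen Γ m * ofv Γ v
  else ofv Γ v

/-- `φ` is the Whitehead automorphism `φ(P, m)`: it sends each generator `v` to
`mvm⁻¹` if `v, v⁻¹ ∈ P`; to `vm⁻¹` if `v ∈ P`, `v⁻¹ ∈ P*`, `v ≠ m^{±1}`; to `mv` if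
`v⁻¹ ∈ P`, `v ∈ P*`, `v ≠ m^{±1}`; and to `v` otherwise. -/
def IsWhitehead (Γ : SimpleGraph V) (P : Set (Vpm V)) (m : Vpm V)
    (φ : MulAut (RAAG Γ)) : Prop :=
  ∀ v : V, φ (ofv Γ v) = whImage Γ P m v

/-- An automorphism is inner if it is conjugation by some group element. -/
def IsInner {G : Type*} [Group G] (φ : MulAut G) : Prop :=
  ∃ g : G, ∀ x, φ x = g * x * g⁻¹

/-- Two automorphisms commute as outer automorphisms iff their commutator is inner. -/
def CommuteOuter {G : Type*} [Group G] (φ ψ : MulAut G) : Prop :=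
  IsInner (φ * ψ * φ⁻¹ * ψ⁻¹)

/-- The subgroup of inner automorphisms. -/
def Inn (G : Type*) [Group G] : Subgroup (MulAut G) := (MulAut.conj : G →* MulAut G).range

instance innNormal (G : Type*) [Group G] : (Inn G).Normal := by
  constructor
  intro n hn φ
  obtain ⟨g, rfl⟩ := hn
  refine ⟨φ g, ?_⟩
  ext x
  simp [MulAut.conj, mul_assoc]

/-- The outer automorphism group `Out(G) = Aut(G)/Inn(G)`. -/
abbrev Out (G : Type*) [Group G] := MulAut G ⧸ Inn G

/-- The projection `Aut(G) → Out(G)`. -/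
def toOut (G : Type*) [Group G] : MulAut G →* Out G := QuotientGroup.mk' (Inn G)


lemma sameComp_trans {Γ : SimpleGraph V} {b u w x : V}
    (h : SameComp Γ b u w) (h' : SameComp Γ b w x) : SameComp Γ b u x := by
  obtain ⟨hu, hw, hr⟩ := h
  obtain ⟨hw', hx, hr'⟩ := h'
  exact ⟨hu, hx, hr.trans hr'⟩

lemma sameComp_adj {Γ : SimpleGraph V} {b u w : V}
    (hu : u ∈ (lk Γ b)ᶜ) (hw : w ∈ (lk Γ b)ᶜ) (h : Γ.Adj u w) : SameComp Γ b u w :=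
  ⟨hu, hw, SimpleGraph.Adj.reachable (by simpa using h)⟩

lemma split_singleton {Γ : SimpleGraph V} {b x : Vpm V} {P : Set (Vpm V)}
    (hP : GWSubset Γ b P) (hx : x ∈ P) (hx' : pinv x ∉ P) :
    comp Γ b.1 x.1 = {x.1} := by
  obtain ⟨-, -, h⟩ := hP
  obtain ⟨U, hU, hxU, hUP⟩ := h x hx
  rcases hU with ⟨u, hcomp, hU1 | hU1⟩ | ⟨u, -, -, hU1⟩
  · subst hU1; simp only [Set.mem_singleton_iff] at hxU; rw [hxU]; exact hcomp
  · subst hU1; simp only [Set.mem_singleton_iff] at hxU; rw [hxU]; exact hcomp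
  · exfalso
    apply hx'
    apply hUP
    subst hU1
    exact hxU

lemma same_side {Γ : SimpleGraph V} {b x : Vpm V} {w : V} {P : Set (Vpm V)}
    (hP : GWSubset Γ b P) (hx : x ∈ P) (hsc : SameComp Γ b.1 x.1 w)
    (hne : comp Γ b.1 x.1 ≠ {x.1}) (t : Bool) : (w, t) ∈ P := by
  obtain ⟨-, -, h⟩ := hP
  obtain ⟨U, hU, hxU, hUP⟩ := h x hx
  rcases hU with ⟨u, hcomp, hU1 | hU1⟩ | ⟨u, -, -, hU1⟩
  · exfalso; subst hU1; simp only [Set.mem_singleton_iff] at hxU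
    exact hne (hxU ▸ hcomp)
  · exfalso; subst hU1; simp only [Set.mem_singleton_iff] at hxU
    exact hne (hxU ▸ hcomp)
  · apply hUP
    subst hU1
    have hux : SameComp Γ b.1 u x.1 := hxU
    exact sameComp_trans hux hsc

/-- Let `m` and `s` be non-equivalent, non-adjacent, distinct vertices.  If a
`ΓW`-partition `Ra` based at the vertex `s` splits some vertex of `[m]`, then
`lk(m) ⊊ lk(s)`.  In particular, if `m` is principal then `Ra` splits no vertex of
`[m]` and all of `[m]^±` lies in a single side of `Ra`. -/
theorem stmt13 {V : Type*} [Fintype V] (Γ : SimpleGraph V) (m s : V)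
    (hne : ¬ Eqv Γ m s) (hnadj : ¬ Γ.Adj m s) (hms : m ≠ s)
    (Ra : GWPartition Γ) (hbase : BasedAtVtx Ra s) :
    (∀ v : V, Eqv Γ m v → Splits Ra v → lk Γ m ⊂ lk Γ s) ∧
    (Principal Γ m →
      (∀ v : V, Eqv Γ m v → ¬ Splits Ra v) ∧
      ((∀ x : Vpm V, Eqv Γ m x.1 → x ∈ Ra.P) ∨
        (∀ x : Vpm V, Eqv Γ m x.1 → x ∈ Ra.Pstar))) := by
  obtain ⟨hLs, hsplits⟩ := hbase
  -- m is not in the link of the base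
  have hmL : m ∉ lk Γ Ra.base.1 := by
    intro h
    rw [← hLs] at h
    exact hnadj (Γ.adj_symm h)
  -- every vertex equivalent to m is not in the link of the base
  have heqvL : ∀ v : V, Eqv Γ m v → v ∉ lk Γ Ra.base.1 := by
    intro v hv h
    rw [← hLs] at h
    have hs : s ∈ lk Γ v := Γ.adj_symm h
    rcases hv.2 hs with h' | h'
    · exact hnadj h'
    · exact hms (Set.mem_singleton_iff.mp h').symm
  have eqv_refl : Eqv Γ m m := ⟨Set.subset_union_left, Set.subset_union_left⟩
  -- Part 1
  have part1 : ∀ v : V, Eqv Γ m v → Splits Ra v → lk Γ m ⊂ lk Γ s := by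
    intro v hv hsp
    have hcomp : comp Γ Ra.base.1 v = {v} := by
      rcases hsp with ⟨h1, h2⟩ | ⟨h1, h2⟩
      · exact split_singleton (x := (v, true)) Ra.hP h1 h2.2
      · have : pinv (v, false) ∉ Ra.P := h2.2
        exact split_singleton (x := (v, false)) Ra.hP h1 this
    have hvmem : v ∈ (lk Γ Ra.base.1)ᶜ := by
      have : v ∈ comp Γ Ra.base.1 v := by rw [hcomp]; rfl
      obtain ⟨hv', -, -⟩ := this
      exact hv'
    have hlkv : lk Γ v ⊆ lk Γ s := by
      intro w hw
      rw [hLs]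
      by_contra hwL
      have : w ∈ comp Γ Ra.base.1 v := sameComp_adj hvmem hwL hw
      rw [hcomp] at this
      rw [Set.mem_singleton_iff] at this
      exact Γ.loopless.irrefl v (this ▸ hw)
    have hsub : lk Γ m ⊆ lk Γ s := by
      intro w hw
      rcases hv.1 hw with h' | h'
      · exact hlkv h'
      · exfalso
        rw [Set.mem_singleton_iff] at h'
        subst h'
        have : m ∈ lk Γ w := Γ.adj_symm hw
        have : Γ.Adj s m := hlkv this
        exact hnadj (Γ.adj_symm this)
    refine ⟨hsub, fun hss => ?_⟩
    have heq : lk Γ m = lk Γ s := le_antisymm hsub hss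
    exact hne ⟨heq ▸ (Set.subset_union_left : lk Γ s ⊆ st Γ s),
      heq ▸ (Set.subset_union_left : lk Γ m ⊆ st Γ m)⟩
  refine ⟨part1, fun hPr => ?_⟩
  have hnosplit : ∀ v : V, Eqv Γ m v → ¬ Splits Ra v :=
    fun v hv hsp => hPr ⟨s, part1 v hv hsp⟩
  have hnsub : ¬ lk Γ m ⊆ lk Γ s := by
    intro h
    by_cases heq : lk Γ m = lk Γ s
    · exact hne ⟨heq ▸ (Set.subset_union_left : lk Γ s ⊆ st Γ s),
        heq ▸ (Set.subset_union_left : lk Γ m ⊆ st Γ m)⟩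
    · exact hPr ⟨s, h, fun h' => heq (le_antisymm h h')⟩
  -- connectivity: any v ∼ m with v ≠ m lies in the same component as m
  have hconn : ∀ v : V, Eqv Γ m v → v ≠ m → SameComp Γ Ra.base.1 m v := by
    intro v hv hvm
    have hvL := heqvL v hv
    by_cases hadj : Γ.Adj m v
    · exact sameComp_adj hmL hvL hadj
    · obtain ⟨u, hu1, hu2⟩ := Set.not_subset.mp hnsub
      have huL : u ∉ lk Γ Ra.base.1 := by rw [← hLs]; exact hu2
      have hvu : Γ.Adj v u := by
        rcases hv.1 hu1 with h' | h'
        · exact h'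
        · exfalso
          rw [Set.mem_singleton_iff] at h'
          subst h'
          exact hadj hu1
      exact sameComp_trans (sameComp_adj hmL huL hu1) (sameComp_adj huL hvL (Γ.adj_symm hvu))
  have hmPstar : (m, true) ∉ Ra.P → (m, true) ∈ Ra.Pstar := by
    intro h
    exact ⟨hmL, h⟩
  refine ⟨hnosplit, ?_⟩
  by_cases hmP : (m, true) ∈ Ra.P
  · left
    have hm2 : (m, false) ∈ Ra.P := by
      by_contra h
      exact hnosplit m eqv_refl (Or.inl ⟨hmP, ⟨hmL, h⟩⟩)
    intro x hx
    by_cases hxm : x.1 = m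
    · have : x = (m, x.2) := by rw [← hxm]
      rw [this]
      cases x.2
      · exact hm2
      · exact hmP
    · have hsc : SameComp Γ Ra.base.1 m x.1 := hconn x.1 hx hxm
      have hcne : comp Γ Ra.base.1 m ≠ {m} := by
        intro h
        have : x.1 ∈ comp Γ Ra.base.1 m := hsc
        rw [h, Set.mem_singleton_iff] at this
        exact hxm this
      have := same_side (x := (m, true)) Ra.hP hmP hsc hcne x.2
      simpa using this
  · right
    have hmP' : (m, true) ∈ Ra.Pstar := hmPstar hmP
    have hm2 : (m, false) ∈ Ra.Pstar := by
      by_contra h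
      have : (m, false) ∈ Ra.P := by
        by_contra h'
        exact h ⟨hmL, h'⟩
      exact hnosplit m eqv_refl (Or.inr ⟨this, hmP'⟩)
    intro x hx
    by_cases hxm : x.1 = m
    · have : x = (m, x.2) := by rw [← hxm]
      rw [this]
      cases x.2
      · exact hm2
      · exact hmP'
    · have hsc : SameComp Γ Ra.base.1 m x.1 := hconn x.1 hx hxm
      have hcne : comp Γ Ra.base.1 m ≠ {m} := by
        intro h
        have : x.1 ∈ comp Γ Ra.base.1 m := hsc
        rw [h, Set.mem_singleton_iff] at this
        exact hxm this
      have := same_side (b := pinv Ra.base) (x := (m, true)) Ra.hPstar hmP' hsc hcne x.2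
      have h2 : x ∈ pstar Γ Ra.base Ra.P := by simpa using this
      exact h2

end GW
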